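/- Fix w ≥ 1 and an f with 1 ≤ f, and view a word as a vector of fields each holding an (f-1)-bit nonnegative number with a designated most significant test bit per field. Let F and G be words whose fields satisfy 0 ≤ F_i, G_i < 2^{f-1}, and let F' be F with the test bit of every field set (i.e., F'_i = F_i + 2^{f-1}). Then in the difference H = F' - G computed as ∑_i (F_i + 2^{f-1} - G_i)·2^{fi}, the test bit of the i-th field of H is 1 if and only if F_i ≥ G_i. -/

import Mathlib

lemma packed_sum_lt (f : ℕ) (X : ℕ → ℕ) :
    ∀ n, (∀ j, j < n → X j < 2 ^ f) →
      ∑ j ∈ Finset.range n, X j * 2 ^ (f * j) < 2 ^ (f * n) := by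
  intro n
  induction n with
  | zero => simp
  | succ n ih =>
    intro h
    rw [Finset.sum_range_succ]
    have h1 : ∑ j ∈ Finset.range n, X j * 2 ^ (f * j) < 2 ^ (f * n) :=
      ih fun j hj => h j (by omega)
    have h2 : X n ≤ 2 ^ f - 1 := by have := h n (by omega); omega
    have h3 : X n * 2 ^ (f * n) ≤ (2 ^ f - 1) * 2 ^ (f * n) :=
      Nat.mul_le_mul_right _ h2
    have h4 : 2 ^ (f * (n + 1)) = 2 ^ f * 2 ^ (f * n) := by
      rw [← pow_add]; ring_nf
    rw [Nat.sub_mul, one_mul] at h3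
    have h6 : 2 ^ (f * n) ≤ 2 ^ f * 2 ^ (f * n) :=
      Nat.le_mul_of_pos_left _ ((by positivity))
    omega

theorem packed_fieldwise_comparison (f k : ℕ) (hf : 1 ≤ f) (F G : ℕ → ℕ)
    (hF : ∀ i, i < k → F i < 2 ^ (f - 1))
    (hG : ∀ i, i < k → G i < 2 ^ (f - 1))
    (H : ℕ)
    (hH : H = ∑ i ∈ Finset.range k, (F i + 2 ^ (f - 1) - G i) * 2 ^ (f * i)) :
    ∀ i, i < k → (Nat.testBit H (f * i + (f - 1)) = true ↔ G i ≤ F i) := by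
  intro i hik
  set e := f - 1 with he
  have hfe : f = e + 1 := by omega
  set X : ℕ → ℕ := fun j => F j + 2 ^ e - G j with hX
  have hXlt : ∀ j, j < k → X j < 2 ^ f := by
    intro j hj
    have h1 := hF j hj
    have h2 : 2 ^ f = 2 * 2 ^ e := by rw [hfe, pow_succ]; ring
    simp only [hX]; omega
  -- split the sum
  have hsplit : H = (∑ j ∈ Finset.range i, X j * 2 ^ (f * j))
      + 2 ^ (f * i) * (X i + 2 ^ f *
        (∑ j ∈ Finset.range (k - (i + 1)), X (i + 1 + j) * 2 ^ (f * j))) := by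
    rw [hH]
    have h1 : ∑ j ∈ Finset.range k, X j * 2 ^ (f * j)
        = (∑ j ∈ Finset.range i, X j * 2 ^ (f * j))
          + ∑ j ∈ Finset.Ico i k, X j * 2 ^ (f * j) := by
      rw [Finset.range_eq_Ico, Finset.range_eq_Ico]
      exact (Finset.sum_Ico_consecutive (fun j => X j * 2 ^ (f * j)) (Nat.zero_le i) hik.le).symm
    have h2 : ∑ j ∈ Finset.Ico i k, X j * 2 ^ (f * j)
        = X i * 2 ^ (f * i) + ∑ j ∈ Finset.Ico (i + 1) k, X j * 2 ^ (f * j) :=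
      Finset.sum_eq_sum_Ico_succ_bot hik _
    have h3 : ∑ j ∈ Finset.Ico (i + 1) k, X j * 2 ^ (f * j)
        = ∑ j ∈ Finset.range (k - (i + 1)), X (i + 1 + j) * 2 ^ (f * (i + 1 + j)) := by
      rw [Finset.sum_Ico_eq_sum_range]
    have h4 : ∀ j : ℕ, X (i + 1 + j) * 2 ^ (f * (i + 1 + j))
        = 2 ^ (f * i) * (2 ^ f * (X (i + 1 + j) * 2 ^ (f * j))) := by
      intro j
      have : f * (i + 1 + j) = f * i + f + f * j := by ring
      rw [this, pow_add, pow_add]; ring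
    show ∑ j ∈ Finset.range k, X j * 2 ^ (f * j) = _
    simp only [h1, h2, h3, h4, ← Finset.mul_sum]
    ring
  set A := ∑ j ∈ Finset.range i, X j * 2 ^ (f * j) with hA
  set C := ∑ j ∈ Finset.range (k - (i + 1)), X (i + 1 + j) * 2 ^ (f * j) with hC
  have hAlt : A < 2 ^ (f * i) := packed_sum_lt f X i (fun j hj => hXlt j (by omega))
  -- compute H / 2^(f*i + e) % 2
  have hdiv1 : H / 2 ^ (f * i) = X i + 2 ^ f * C := by
    rw [hsplit, Nat.add_mul_div_left _ _ ((by positivity)),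
      Nat.div_eq_of_lt hAlt, zero_add]
  have hdiv2 : H / 2 ^ (f * i + e) = (X i + 2 ^ f * C) / 2 ^ e := by
    rw [pow_add, ← Nat.div_div_eq_div_mul, hdiv1]
  have h2f : 2 ^ f = 2 ^ e * 2 := by rw [hfe, pow_succ]
  have hdiv3 : (X i + 2 ^ f * C) / 2 ^ e = X i / 2 ^ e + 2 * C := by
    have : 2 ^ f * C = (2 * C) * 2 ^ e := by rw [h2f]; ring
    rw [this, Nat.add_mul_div_right _ _ ((by positivity))]
  have hXi : X i / 2 ^ e = if G i ≤ F i then 1 else 0 := by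
    have h1 := hF i hik
    have h2 := hG i hik
    have hepos : 0 < 2 ^ e := (by positivity)
    split
    · next hle =>
      have : X i = (F i - G i) + 1 * 2 ^ e := by simp only [hX]; omega
      rw [this, Nat.add_mul_div_right _ _ hepos, Nat.div_eq_of_lt (by omega)]
    · next hlt =>
      exact Nat.div_eq_of_lt (by simp only [hX]; omega)
  rw [Nat.testBit_eq_decide_div_mod_eq, hdiv2, hdiv3, hXi]
  split <;> simp <;> omega
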